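/- arXiv:0901.3348 — 2 statements merged into one kernel-verified Lean document; each statement's English description precedes it below -/
import Mathlib

section
/- Under the hypotheses of the optimality theorem for the relaxation (R) — namely, U* ⊆ {1,…,M} with |U*| = m ≥ 1 and V* ⊆ {1,…,N} with |V*| = n ≥ 1 with characteristic vectors ū, v̄, U* × V* ⊆ E, and there exist W ∈ R^{M×N}, λ ∈ R^{M×N}, μ ≥ 0 with W v̄ = 0, ūᵀ W = 0, ‖W‖ ≤ 1, and ū v̄ᵀ/√(mn) + W = μ e eᵀ + Σ_{(i,j)∈Ẽ} λ_{ij} e_i e_jᵀ — the following holds: for every pair of sets I ⊆ {1,…,M} and J ⊆ {1,…,N} with I × J ⊆ E, one has |I|·|J| ≤ mn. -/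
open Matrix

/-- The spectral norm (largest singular value) of a real matrix. -/
noncomputable def matSpectralNorm {m n : Type*} [Fintype m] [Fintype n] [DecidableEq n]
    (A : Matrix m n ℝ) : ℝ :=
  ‖LinearMap.toContinuousLinearMap (Matrix.toEuclideanLin A)‖

/-- The nuclear norm (sum of singular values) of a real matrix. -/
noncomputable def nuclearNorm {m n : Type*} [Fintype m] [Fintype n] [DecidableEq n]
    (A : Matrix m n ℝ) : ℝ :=
  ∑ j, Real.sqrt ((Matrix.isHermitian_conjTranspose_mul_self A).eigenvalues j)

/-- The characteristic vector of a finite set of indices. -/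
def charVec {ι : Type*} [DecidableEq ι] (S : Finset ι) : ι → ℝ :=
  fun i => if i ∈ S then 1 else 0

/-- Feasibility for the relaxation (R): `∑_{i,j} X_{ij} ≥ mn` and `X_{ij} = 0` for all
`(i,j)` in the complement of `E`. -/
def FeasR {M N : ℕ} (E : Set (Fin M × Fin N)) (m n : ℕ)
    (X : Matrix (Fin M) (Fin N) ℝ) : Prop :=
  (m : ℝ) * n ≤ (∑ i, ∑ j, X i j) ∧ ∀ i j, (i, j) ∉ E → X i j = 0

/- ### Auxiliary lemmas -/

lemma charVec_mul_sum {ι : Type*} [DecidableEq ι] [Fintype ι] (S T : Finset ι) :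
    ∑ i, charVec S i * charVec T i = ((S ∩ T).card : ℝ) := by
  have h : ∀ i, charVec S i * charVec T i = if i ∈ S ∩ T then (1:ℝ) else 0 := by
    intro i
    by_cases h1 : i ∈ S <;> by_cases h2 : i ∈ T <;> simp [charVec, h1, h2]
  rw [Finset.sum_congr rfl fun i _ => h i]
  simp only [Finset.sum_ite_mem, Finset.univ_inter, Finset.sum_const, nsmul_eq_mul, mul_one]

lemma charVec_sum {ι : Type*} [DecidableEq ι] [Fintype ι] (S : Finset ι) :
    ∑ i, charVec S i = (S.card : ℝ) := by
  simp [charVec]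

lemma charVec_dot {ι : Type*} [DecidableEq ι] [Fintype ι] (S T : Finset ι) :
    charVec S ⬝ᵥ charVec T = ((S ∩ T).card : ℝ) := charVec_mul_sum S T

lemma spec_bound {M N : ℕ} (A : Matrix (Fin M) (Fin N) ℝ) (x : Fin M → ℝ) (y : Fin N → ℝ) :
    |x ⬝ᵥ (A *ᵥ y)| ≤ matSpectralNorm A * Real.sqrt (∑ i, x i ^ 2) * Real.sqrt (∑ j, y j ^ 2) := by
  set x' : EuclideanSpace ℝ (Fin M) := (WithLp.equiv 2 _).symm x
  set y' : EuclideanSpace ℝ (Fin N) := (WithLp.equiv 2 _).symm y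
  have h1 : x ⬝ᵥ (A *ᵥ y) = (inner ℝ x' (Matrix.toEuclideanLin A y') : ℝ) := by
    simp [PiLp.inner_apply, dotProduct, Matrix.toEuclideanLin_apply, x', y', mulVec,
      RCLike.inner_apply, conj_trivial, WithLp.equiv_symm_apply, mul_comm]
  have h2 : ‖x'‖ = Real.sqrt (∑ i, x i ^ 2) := by
    simp [EuclideanSpace.norm_eq, x', sq_abs]
  have h3 : ‖y'‖ = Real.sqrt (∑ j, y j ^ 2) := by
    simp [EuclideanSpace.norm_eq, y', sq_abs]
  have h4 : ‖Matrix.toEuclideanLin A y'‖ ≤ matSpectralNorm A * ‖y'‖ :=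
    (LinearMap.toContinuousLinearMap (Matrix.toEuclideanLin A)).le_opNorm y'
  calc |x ⬝ᵥ (A *ᵥ y)| = |(inner ℝ x' (Matrix.toEuclideanLin A y') : ℝ)| := by rw [h1]
    _ ≤ ‖x'‖ * ‖Matrix.toEuclideanLin A y'‖ := abs_real_inner_le_norm _ _
    _ ≤ ‖x'‖ * (matSpectralNorm A * ‖y'‖) := by
        have := norm_nonneg x'
        nlinarith [norm_nonneg (Matrix.toEuclideanLin A y')]
    _ = matSpectralNorm A * Real.sqrt (∑ i, x i ^ 2) * Real.sqrt (∑ j, y j ^ 2) := by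
        rw [h2, h3]; ring

lemma pairing_key {M N : ℕ} (u : Fin M → ℝ) (v : Fin N → ℝ)
    (W Λ : Matrix (Fin M) (Fin N) ℝ) (c μ : ℝ)
    (heq : c • vecMulVec u v + W = μ • Matrix.of (fun _ _ => (1 : ℝ)) + Λ)
    (x : Fin M → ℝ) (y : Fin N → ℝ) :
    c * (x ⬝ᵥ u) * (v ⬝ᵥ y) + x ⬝ᵥ (W *ᵥ y)
      = μ * (∑ i, x i) * (∑ j, y j) + ∑ i, ∑ j, x i * Λ i j * y j := by
  have h := congrArg (fun A => x ⬝ᵥ (A *ᵥ y)) heq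
  simp only [add_mulVec, dotProduct_add, smul_mulVec, dotProduct_smul] at h
  have h1 : x ⬝ᵥ (vecMulVec u v *ᵥ y) = (x ⬝ᵥ u) * (v ⬝ᵥ y) := by
    simp [dotProduct, mulVec, vecMulVec_apply, Finset.mul_sum, Finset.sum_mul]
    rw [Finset.sum_comm]
    exact Finset.sum_congr rfl fun j _ => Finset.sum_congr rfl fun i _ => by ring
  have h2 : x ⬝ᵥ ((Matrix.of (fun _ _ => (1:ℝ))) *ᵥ y) = (∑ i, x i) * (∑ j, y j) := by
    simp [dotProduct, mulVec, Finset.sum_mul, Finset.mul_sum]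
    rw [Finset.sum_comm]
  have h3 : x ⬝ᵥ (Λ *ᵥ y) = ∑ i, ∑ j, x i * Λ i j * y j := by
    simp [dotProduct, mulVec, Finset.mul_sum, mul_assoc]
  rw [h1, h2, h3] at h
  rw [smul_eq_mul, smul_eq_mul] at h
  linarith [h]

set_option maxHeartbeats 1600000 in
lemma final_ineq (A B a b m n s g : ℝ) (hA : 0 ≤ A) (hB : 0 ≤ B) (ha : 0 ≤ a) (hb : 0 ≤ b)
    (hm : 0 < m) (hn : 0 < n) (hs : 0 < s) (hs2 : s^2 = m*n) (hg : 0 ≤ g)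
    (hg2 : g^2 = (A - a^2/m) * (B - b^2/n))
    (hP : a^2 ≤ m*A) (hQ : b^2 ≤ n*B)
    (hmain : A*B ≤ a*b + s*g) : A*B ≤ m*n := by
  have hsg2 : (s*g)^2 = (m*A - a^2)*(n*B - b^2) := by
    rw [mul_pow, hs2, hg2]; field_simp
  have hsg : s*g = Real.sqrt (m*A - a^2) * Real.sqrt (n*B - b^2) := by
    rw [← Real.sqrt_mul (by linarith), ← hsg2, Real.sqrt_sq (mul_nonneg hs.le hg)]
  set X := Real.sqrt (m*A - a^2) with hX
  set Y := Real.sqrt (n*B - b^2) with hY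
  have hX0 : 0 ≤ X := Real.sqrt_nonneg _
  have hY0 : 0 ≤ Y := Real.sqrt_nonneg _
  have hX2 : X^2 = m*A - a^2 := Real.sq_sqrt (by linarith)
  have hY2 : Y^2 = n*B - b^2 := Real.sq_sqrt (by linarith)
  have hXY : 2*(a*b)*(X*Y) ≤ b^2*X^2 + a^2*Y^2 := by nlinarith [sq_nonneg (b*X - a*Y)]
  have hXY2 : (X*Y)^2 = (m*A - a^2)*(n*B - b^2) := by rw [mul_pow, hX2, hY2]
  have hsq : (a*b + s*g)^2 ≤ m*n*(A*B) := by
    rw [hsg]; nlinarith [hX2, hY2, hXY, hXY2]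
  have habsg : 0 ≤ a*b + s*g := by positivity
  have h1 : (A*B)^2 ≤ m*n*(A*B) := by nlinarith [hsq, hmain, mul_nonneg hA hB, habsg]
  rcases eq_or_lt_of_le (mul_nonneg hA hB) with h|h
  · nlinarith [mul_pos hm hn]
  · have h2 : (A*B)*(A*B) ≤ (m*n)*(A*B) := by nlinarith [h1]
    exact le_of_mul_le_mul_right h2 h

set_option maxHeartbeats 2000000 in
/-- under the hypotheses of the optimality theorem for the relaxation (R),
every pair `I ⊆ {1,…,M}`, `J ⊆ {1,…,N}` with `I × J ⊆ E` satisfies `|I|·|J| ≤ mn`. -/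
theorem relaxation_max_biclique_bound
    (M N m n : ℕ) (hm : 1 ≤ m) (hn : 1 ≤ n)
    (E : Set (Fin M × Fin N))
    (Ustar : Finset (Fin M)) (Vstar : Finset (Fin N))
    (hUm : Ustar.card = m) (hVn : Vstar.card = n)
    (hfeas : ∀ i ∈ Ustar, ∀ j ∈ Vstar, (i, j) ∈ E)
    (W Λ : Matrix (Fin M) (Fin N) ℝ) (μ : ℝ) (hμ : 0 ≤ μ)
    (hWv : W *ᵥ charVec Vstar = 0)
    (hWu : charVec Ustar ᵥ* W = 0)
    (hWnorm : matSpectralNorm W ≤ 1)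
    (hΛ : ∀ i j, (i, j) ∈ E → Λ i j = 0)
    (heq : (Real.sqrt ((m : ℝ) * n))⁻¹ • vecMulVec (charVec Ustar) (charVec Vstar) + W
         = μ • Matrix.of (fun _ _ => (1 : ℝ)) + Λ) :
    ∀ (I : Finset (Fin M)) (J : Finset (Fin N)),
      (∀ i ∈ I, ∀ j ∈ J, (i, j) ∈ E) → I.card * J.card ≤ m * n := by
  intro I J hIJ
  classical
  have hm1 : (1:ℝ) ≤ (m:ℝ) := by exact_mod_cast hm
  have hn1 : (1:ℝ) ≤ (n:ℝ) := by exact_mod_cast hn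
  have hmn1 : (1:ℝ) ≤ (m:ℝ)*n := by nlinarith
  set s := Real.sqrt ((m:ℝ)*n) with hs
  set c := s⁻¹ with hc
  have hspos : 0 < s := Real.sqrt_pos.mpr (by linarith)
  have hcpos : 0 < c := inv_pos.mpr hspos
  have hsc : s * c = 1 := mul_inv_cancel₀ hspos.ne'
  have hs2 : s^2 = (m:ℝ)*n := Real.sq_sqrt (by linarith)
  have key := pairing_key (charVec Ustar) (charVec Vstar) W Λ c μ heq
  have lamzero : ∀ (P : Finset (Fin M)) (Q : Finset (Fin N)),
      (∀ i ∈ P, ∀ j ∈ Q, (i,j) ∈ E) →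
      ∑ i, ∑ j, charVec P i * Λ i j * charVec Q j = 0 := by
    intro P Q hPQ
    refine Finset.sum_eq_zero fun i _ => Finset.sum_eq_zero fun j _ => ?_
    by_cases h1 : i ∈ P
    · by_cases h2 : j ∈ Q
      · rw [hΛ i j (hPQ i h1 j h2)]; ring
      · simp [charVec, h2]
    · simp [charVec, h1]
  -- Step 1: μ = c
  have key1 := key (charVec Ustar) (charVec Vstar)
  rw [charVec_dot, charVec_dot, Finset.inter_self, Finset.inter_self, hUm, hVn,
    charVec_sum, charVec_sum, hUm, hVn, lamzero Ustar Vstar hfeas,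
    dotProduct_mulVec, hWu, zero_dotProduct] at key1
  have hμc : μ = c := by
    have h : μ * ((m:ℝ)*n) = c * ((m:ℝ)*n) := by linarith
    exact mul_right_cancel₀ (by positivity) h
  -- Step 2: pairing with I, J
  set a := (((I ∩ Ustar).card : ℕ) : ℝ) with hadef
  set b := (((Vstar ∩ J).card : ℕ) : ℝ) with hbdef
  set A := ((I.card : ℕ) : ℝ) with hAdef
  set B := ((J.card : ℕ) : ℝ) with hBdef
  have key2 := key (charVec I) (charVec J)
  rw [charVec_dot, charVec_dot, charVec_sum, charVec_sum, lamzero I J hIJ, hμc] at key2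
  set T := charVec I ⬝ᵥ (W *ᵥ charVec J) with hTdef
  -- Step 3: rewrite T with projected vectors
  set x' : Fin M → ℝ := charVec I - (a/m) • charVec Ustar with hx'
  set y' : Fin N → ℝ := charVec J - (b/n) • charVec Vstar with hy'
  have hT : x' ⬝ᵥ (W *ᵥ y') = T := by
    rw [hx', hy', mulVec_sub, mulVec_smul, hWv, smul_zero, sub_zero,
      sub_dotProduct, smul_dotProduct, dotProduct_mulVec (charVec Ustar), hWu,
      zero_dotProduct, smul_zero, sub_zero]
  -- Step 4: norms of the projected vectors
  have hmpos : (0:ℝ) < m := by linarith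
  have hnpos : (0:ℝ) < n := by linarith
  have hx2 : ∑ i, x' i ^ 2 = A - a^2/m := by
    have hexp : ∀ i, x' i ^ 2 = charVec I i * charVec I i
        - (2*(a/m)) * (charVec I i * charVec Ustar i)
        + (a/m)^2 * (charVec Ustar i * charVec Ustar i) := by
      intro i; rw [hx']; simp only [Pi.sub_apply, Pi.smul_apply, smul_eq_mul]; ring
    rw [Finset.sum_congr rfl fun i _ => hexp i]
    rw [Finset.sum_add_distrib, Finset.sum_sub_distrib, ← Finset.mul_sum, ← Finset.mul_sum,
      charVec_mul_sum, charVec_mul_sum, charVec_mul_sum, Finset.inter_self,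
      Finset.inter_self, hUm]
    rw [← hadef, ← hAdef]
    field_simp
    ring
  have hy2 : ∑ j, y' j ^ 2 = B - b^2/n := by
    have hexp : ∀ j, y' j ^ 2 = charVec J j * charVec J j
        - (2*(b/n)) * (charVec J j * charVec Vstar j)
        + (b/n)^2 * (charVec Vstar j * charVec Vstar j) := by
      intro j; rw [hy']; simp only [Pi.sub_apply, Pi.smul_apply, smul_eq_mul]; ring
    rw [Finset.sum_congr rfl fun j _ => hexp j]
    rw [Finset.sum_add_distrib, Finset.sum_sub_distrib, ← Finset.mul_sum, ← Finset.mul_sum,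
      charVec_mul_sum, charVec_mul_sum, charVec_mul_sum, Finset.inter_self,
      Finset.inter_self, hVn, Finset.inter_comm J Vstar]
    rw [← hbdef, ← hBdef]
    field_simp
    ring
  -- Step 5: spectral bound
  have hspec := spec_bound W x' y'
  rw [hT, hx2, hy2] at hspec
  have hPnn : 0 ≤ A - a^2/m := by
    have haA : a ≤ A := by
      rw [hadef, hAdef]; exact_mod_cast Finset.card_le_card (Finset.inter_subset_left)
    have ham : a ≤ (m:ℝ) := by
      rw [hadef, ← hUm]; exact_mod_cast Finset.card_le_card (Finset.inter_subset_right)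
    have ha0 : 0 ≤ a := by rw [hadef]; positivity
    rw [sub_nonneg, div_le_iff₀ hmpos]; nlinarith
  have hQnn : 0 ≤ B - b^2/n := by
    have hbB : b ≤ B := by
      rw [hbdef, hBdef]; exact_mod_cast Finset.card_le_card (Finset.inter_subset_right)
    have hbn : b ≤ (n:ℝ) := by
      rw [hbdef, ← hVn]; exact_mod_cast Finset.card_le_card (Finset.inter_subset_left)
    have hb0 : 0 ≤ b := by rw [hbdef]; positivity
    rw [sub_nonneg, div_le_iff₀ hnpos]; nlinarith
  have hTb : |T| ≤ Real.sqrt (A - a^2/m) * Real.sqrt (B - b^2/n) := by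
    refine hspec.trans ?_
    have h2 := mul_le_mul_of_nonneg_right
      (mul_le_mul_of_nonneg_right hWnorm (Real.sqrt_nonneg (A - a^2/m)))
      (Real.sqrt_nonneg (B - b^2/n))
    simpa using h2
  -- Step 6: main inequality
  set g := Real.sqrt (A - a^2/m) * Real.sqrt (B - b^2/n) with hgdef
  have hg0 : 0 ≤ g := by positivity
  have hmain : A*B ≤ a*b + s*g := by
    have h1 : c*(A*B - a*b) ≤ g := by
      have h4 := le_abs_self T
      nlinarith [key2]
    have h2 : s * (c * (A*B - a*b)) ≤ s * g := mul_le_mul_of_nonneg_left h1 hspos.le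
    have h3 : s * (c * (A*B - a*b)) = A*B - a*b := by rw [← mul_assoc, hsc, one_mul]
    linarith
  have hg2 : g^2 = (A - a^2/m) * (B - b^2/n) := by
    rw [hgdef, mul_pow, Real.sq_sqrt hPnn, Real.sq_sqrt hQnn]
  have ha0 : 0 ≤ a := by rw [hadef]; positivity
  have hb0 : 0 ≤ b := by rw [hbdef]; positivity
  have hA0 : 0 ≤ A := by rw [hAdef]; positivity
  have hB0 : 0 ≤ B := by rw [hBdef]; positivity
  have hP' : a^2 ≤ (m:ℝ)*A := by
    have := hPnn; rw [sub_nonneg, div_le_iff₀ hmpos] at this; nlinarith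
  have hQ' : b^2 ≤ (n:ℝ)*B := by
    have := hQnn; rw [sub_nonneg, div_le_iff₀ hnpos] at this; nlinarith
  have hfinal : A*B ≤ (m:ℝ)*n :=
    final_ineq A B a b m n s g hA0 hB0 ha0 hb0 hmpos hnpos hspos hs2 hg0 hg2 hP' hQ' hmain
  rw [hAdef, hBdef] at hfinal
  exact_mod_cast hfinal
end

section
/- Let G = ((U,V), E) be a bipartite graph with |U| = M and |V| = N, and let U* × V* ⊆ E be the vertex set of a biclique of G with |U*| = m ≥ 1 and |V*| = n ≥ 1. Let ū ∈ R^M and v̄ ∈ R^N be the characteristic vectors of U* and V*, and let X* = ū v̄ᵀ. Suppose there exist W ∈ R^{M×N}, λ ∈ R^{M×N}, and μ ≥ 0 such that W v̄ = 0, ūᵀ W = 0, ‖W‖ ≤ 1, and ū v̄ᵀ/√(mn) + W = μ e eᵀ + Σ_{(i,j) ∉ E} λ_{ij} e_i e_jᵀ. Then X* is an optimal solution of the biclique relaxation (B), and G does not contain any biclique with more than mn edges. If moreover ‖W‖ < 1 and μ > 0, then X* is the unique optimal solution of (B) and U* × V* is the unique biclique of G with mn edges. -/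
open Matrix

namespace BQ
variable {M N : ℕ}

noncomputable def evec (X : Matrix (Fin M) (Fin N) ℝ) (j : Fin N) : Fin N → ℝ :=
  ⇑((Matrix.isHermitian_conjTranspose_mul_self X).eigenvectorBasis j)

noncomputable def eval' (X : Matrix (Fin M) (Fin N) ℝ) (j : Fin N) : ℝ :=
  (Matrix.isHermitian_conjTranspose_mul_self X).eigenvalues j

lemma nuclearNorm_eq (X : Matrix (Fin M) (Fin N) ℝ) :
    nuclearNorm X = ∑ j, Real.sqrt (eval' X j) := rfl

lemma dot_self_nonneg {K : ℕ} (v : Fin K → ℝ) : 0 ≤ v ⬝ᵥ v :=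
  Finset.sum_nonneg fun _ _ => mul_self_nonneg _

lemma parseval (X : Matrix (Fin M) (Fin N) ℝ) (a b : Fin N → ℝ) :
    ∑ j, (a ⬝ᵥ evec X j) * (b ⬝ᵥ evec X j) = a ⬝ᵥ b := by
  have h := OrthonormalBasis.sum_inner_mul_inner
    ((Matrix.isHermitian_conjTranspose_mul_self X).eigenvectorBasis)
    ((WithLp.equiv 2 _).symm a) ((WithLp.equiv 2 _).symm b)
  simp only [PiLp.inner_apply, RCLike.inner_apply, starRingEnd_apply, star_trivial,
    WithLp.equiv_symm_apply, WithLp.ofLp_toLp] at h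
  rw [dotProduct, Finset.sum_congr rfl fun i _ => mul_comm (a i) (b i), ← h]
  refine Finset.sum_congr rfl fun j _ => ?_
  simp only [dotProduct, evec]
  congr 1
  exact Finset.sum_congr rfl fun k _ => mul_comm _ _

lemma eig_mulvec (X : Matrix (Fin M) (Fin N) ℝ) (j : Fin N) :
    (Xᵀ * X) *ᵥ evec X j = eval' X j • evec X j :=
  (Matrix.isHermitian_conjTranspose_mul_self X).mulVec_eigenvectorBasis j

lemma evec_norm (X : Matrix (Fin M) (Fin N) ℝ) (j : Fin N) :
    evec X j ⬝ᵥ evec X j = 1 := by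
  have h1 := ((Matrix.isHermitian_conjTranspose_mul_self X).eigenvectorBasis).orthonormal.1 j
  rw [EuclideanSpace.norm_eq] at h1
  have h2 := Real.sqrt_eq_one.mp h1
  simpa [dotProduct, evec, Real.norm_eq_abs, sq_abs, pow_two] using h2

lemma eval_eq_dot (X : Matrix (Fin M) (Fin N) ℝ) (j : Fin N) :
    (X *ᵥ evec X j) ⬝ᵥ (X *ᵥ evec X j) = eval' X j := by
  rw [Matrix.dotProduct_mulVec]
  have h1 : (X *ᵥ evec X j) ᵥ* X = Xᵀ *ᵥ (X *ᵥ evec X j) := by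
    rw [Matrix.mulVec_transpose]
  rw [h1, Matrix.mulVec_mulVec, eig_mulvec, smul_dotProduct, evec_norm, smul_eq_mul, mul_one]

lemma eval_nonneg (X : Matrix (Fin M) (Fin N) ℝ) (j : Fin N) : 0 ≤ eval' X j := by
  rw [← eval_eq_dot]; exact dot_self_nonneg _

lemma expansion (X : Matrix (Fin M) (Fin N) ℝ) (i : Fin M) (k : Fin N) :
    X i k = ∑ j, (X *ᵥ evec X j) i * evec X j k := by
  have h := parseval X (fun k' => X i k') (Pi.single k 1)
  have h2 : (fun k' => X i k') ⬝ᵥ Pi.single k 1 = X i k := by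
    simp [dotProduct, Pi.single_apply]
  rw [h2] at h
  rw [← h]
  refine Finset.sum_congr rfl fun j _ => ?_
  congr 1
  simp [dotProduct, Pi.single_apply]

lemma trace_pairing (X Y : Matrix (Fin M) (Fin N) ℝ) :
    ∑ i, ∑ k, Y i k * X i k = ∑ j, (Y *ᵥ evec X j) ⬝ᵥ (X *ᵥ evec X j) := by
  have : ∀ j, (Y *ᵥ evec X j) ⬝ᵥ (X *ᵥ evec X j)
      = ∑ i, ((fun k => Y i k) ⬝ᵥ evec X j) * ((fun k => X i k) ⬝ᵥ evec X j) := by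
    intro j; rfl
  simp_rw [this]
  conv_rhs => rw [Finset.sum_comm]
  refine Finset.sum_congr rfl fun i _ => ?_
  have := parseval X (fun k => Y i k) (fun k => X i k)
  rw [this]
  rfl

lemma dot_eq_normsq {K : ℕ} (y : Fin K → ℝ) :
    ‖(WithLp.equiv 2 (Fin K → ℝ)).symm y‖ = Real.sqrt (y ⬝ᵥ y) := by
  rw [EuclideanSpace.norm_eq]
  congr 1
  simp [dotProduct, Real.norm_eq_abs, sq_abs, pow_two]

lemma spectral_bound (A : Matrix (Fin M) (Fin N) ℝ) (x : Fin N → ℝ) :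
    (A *ᵥ x) ⬝ᵥ (A *ᵥ x) ≤ (matSpectralNorm A)^2 * (x ⬝ᵥ x) := by
  have h := (LinearMap.toContinuousLinearMap (Matrix.toEuclideanLin A)).le_opNorm
    ((WithLp.equiv 2 (Fin N → ℝ)).symm x)
  have happ : (LinearMap.toContinuousLinearMap (Matrix.toEuclideanLin A))
      ((WithLp.equiv 2 (Fin N → ℝ)).symm x) = (WithLp.equiv 2 (Fin M → ℝ)).symm (A *ᵥ x) := by
    simp [Matrix.toEuclideanLin_apply]
  rw [happ, dot_eq_normsq, dot_eq_normsq] at h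
  have h0 : 0 ≤ (A *ᵥ x) ⬝ᵥ (A *ᵥ x) := dot_self_nonneg _
  have h1 : 0 ≤ x ⬝ᵥ x := dot_self_nonneg _
  unfold matSpectralNorm
  have hρ : 0 ≤ ‖LinearMap.toContinuousLinearMap (Matrix.toEuclideanLin A)‖ := norm_nonneg _
  nlinarith [Real.sq_sqrt h0, Real.sq_sqrt h1, Real.sqrt_nonneg ((A *ᵥ x) ⬝ᵥ (A *ᵥ x)),
    Real.sqrt_nonneg (x ⬝ᵥ x)]

lemma spectralNorm_nonneg (A : Matrix (Fin M) (Fin N) ℝ) : 0 ≤ matSpectralNorm A := norm_nonneg _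

lemma term_le (X Y : Matrix (Fin M) (Fin N) ℝ)
    (hY : ∀ x : Fin N → ℝ, (Y *ᵥ x) ⬝ᵥ (Y *ᵥ x) ≤ x ⬝ᵥ x) (j : Fin N) :
    (Y *ᵥ evec X j) ⬝ᵥ (X *ᵥ evec X j) ≤ Real.sqrt (eval' X j) := by
  have hcs := Real.sum_mul_le_sqrt_mul_sqrt Finset.univ (Y *ᵥ evec X j) (X *ᵥ evec X j)
  have e1 : ∑ i, (Y *ᵥ evec X j) i ^ 2 = (Y *ᵥ evec X j) ⬝ᵥ (Y *ᵥ evec X j) := by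
    simp [dotProduct, pow_two]
  have e2 : ∑ i, (X *ᵥ evec X j) i ^ 2 = (X *ᵥ evec X j) ⬝ᵥ (X *ᵥ evec X j) := by
    simp [dotProduct, pow_two]
  rw [e1, e2, eval_eq_dot] at hcs
  have h2 : Real.sqrt ((Y *ᵥ evec X j) ⬝ᵥ (Y *ᵥ evec X j)) ≤ 1 := by
    rw [show (1:ℝ) = Real.sqrt 1 by simp]
    exact Real.sqrt_le_sqrt ((hY _).trans_eq (evec_norm X j))
  calc (Y *ᵥ evec X j) ⬝ᵥ (X *ᵥ evec X j)
      ≤ Real.sqrt ((Y *ᵥ evec X j) ⬝ᵥ (Y *ᵥ evec X j)) * Real.sqrt (eval' X j) := hcs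
    _ ≤ 1 * Real.sqrt (eval' X j) :=
        mul_le_mul_of_nonneg_right h2 (Real.sqrt_nonneg _)
    _ = Real.sqrt (eval' X j) := one_mul _

lemma key_lower (X Y : Matrix (Fin M) (Fin N) ℝ)
    (hY : ∀ x : Fin N → ℝ, (Y *ᵥ x) ⬝ᵥ (Y *ᵥ x) ≤ x ⬝ᵥ x) :
    ∑ i, ∑ k, Y i k * X i k ≤ nuclearNorm X := by
  rw [trace_pairing, nuclearNorm_eq]
  exact Finset.sum_le_sum fun j _ => term_le X Y hY j

lemma vmv_mulVec {K : ℕ} (a : Fin K → ℝ) (b x : Fin N → ℝ) :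
    vecMulVec a b *ᵥ x = (b ⬝ᵥ x) • a := by
  ext i
  simp [mulVec, vecMulVec_apply, dotProduct, Finset.sum_mul, Finset.mul_sum,
    mul_comm, mul_assoc, mul_left_comm]


variable {M N : ℕ}

lemma nuclear_vecMulVec (a : Fin M → ℝ) (b : Fin N → ℝ) :
    nuclearNorm (vecMulVec a b) = Real.sqrt (a ⬝ᵥ a) * Real.sqrt (b ⬝ᵥ b) := by
  set X := vecMulVec a b with hX
  have hXu : ∀ j, X *ᵥ evec X j = (b ⬝ᵥ evec X j) • a := fun j => vmv_mulVec a b _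
  -- eigenvalue via norm
  have hlam : ∀ j, eval' X j = (b ⬝ᵥ evec X j)^2 * (a ⬝ᵥ a) := by
    intro j
    rw [← eval_eq_dot, hXu j, smul_dotProduct, dotProduct_smul,
      smul_eq_mul, smul_eq_mul]
    ring
  -- X^T X  = (a⬝a) • vecMulVec b b
  have hH : Xᵀ * X = (a ⬝ᵥ a) • vecMulVec b b := by
    ext k k'
    simp [Matrix.mul_apply, transpose_apply, hX, vecMulVec_apply, dotProduct,
      Finset.sum_mul, Finset.mul_sum]
    refine Finset.sum_congr rfl fun i _ => by ring
  -- eigen equation dotted with b : each eigenvalue is 0 or T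
  set T := (a ⬝ᵥ a) * (b ⬝ᵥ b) with hT
  have halt : ∀ j, eval' X j = 0 ∨ eval' X j = T := by
    intro j
    by_cases hbu : b ⬝ᵥ evec X j = 0
    · left; rw [hlam j, hbu]; ring
    · right
      have he := eig_mulvec X j
      rw [hH] at he
      have := congrArg (fun v => b ⬝ᵥ v) he
      simp only [Matrix.smul_mulVec, vmv_mulVec, dotProduct_smul] at this
      -- this : b ⬝ᵥ ((a⬝a) • ((b ⬝ᵥ evec X j) • b)) = eval' X j • (b ⬝ᵥ evec X j) -- roughly
      have h2 : (a ⬝ᵥ a) * ((b ⬝ᵥ evec X j) * (b ⬝ᵥ b)) = eval' X j * (b ⬝ᵥ evec X j) := by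
        simpa [smul_smul, dotProduct_smul, smul_eq_mul, mul_comm, mul_assoc,
          mul_left_comm] using this
      have h3 : eval' X j * (b ⬝ᵥ evec X j) = T * (b ⬝ᵥ evec X j) := by
        rw [← h2, hT]; ring
      exact mul_right_cancel₀ hbu h3
  have hsumT : ∑ j, eval' X j = T := by
    have hp := parseval X b b
    calc ∑ j, eval' X j = ∑ j, (b ⬝ᵥ evec X j)^2 * (a ⬝ᵥ a) := by
          exact Finset.sum_congr rfl fun j _ => hlam j
      _ = (∑ j, (b ⬝ᵥ evec X j) * (b ⬝ᵥ evec X j)) * (a ⬝ᵥ a) := by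
          rw [Finset.sum_mul]; exact Finset.sum_congr rfl fun j _ => by ring
      _ = T := by rw [hp, hT]; ring
  have hTnn : 0 ≤ T := mul_nonneg (dot_self_nonneg a) (dot_self_nonneg b)
  rw [nuclearNorm_eq]
  rcases eq_or_lt_of_le hTnn with hT0 | hTpos
  · -- T = 0 : all eigenvalues are 0
    have : ∀ j, eval' X j = 0 := by
      intro j; rcases halt j with h | h
      · exact h
      · rw [h, ← hT0]
    rw [← Real.sqrt_mul (dot_self_nonneg a), ← hT, ← hT0]
    simp [this]
  · -- T > 0
    have hstep : ∀ j, Real.sqrt (eval' X j) * Real.sqrt T = eval' X j := by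
      intro j
      rcases halt j with h | h
      · simp [h]
      · rw [h, Real.mul_self_sqrt hTnn]
    have hsq : 0 < Real.sqrt T := Real.sqrt_pos.mpr hTpos
    have h4 : (∑ j, Real.sqrt (eval' X j)) * Real.sqrt T = T := by
      rw [Finset.sum_mul]
      calc (∑ j, Real.sqrt (eval' X j) * Real.sqrt T) = ∑ j, eval' X j :=
            Finset.sum_congr rfl fun j _ => hstep j
        _ = T := hsumT
    have h5 : (∑ j, Real.sqrt (eval' X j)) = T / Real.sqrt T := by
      rw [eq_div_iff (ne_of_gt hsq)]; exact h4
    rw [h5, Real.div_sqrt, hT, Real.sqrt_mul (dot_self_nonneg a)]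

variable {M N : ℕ}

lemma key_strict (X Y : Matrix (Fin M) (Fin N) ℝ) (vb : Fin N → ℝ) (nr : ℝ) (hnr : 0 < nr)
    (hvv : vb ⬝ᵥ vb = nr)
    (hY1 : ∀ x : Fin N → ℝ, (Y *ᵥ x) ⬝ᵥ (Y *ᵥ x) ≤ x ⬝ᵥ x)
    (hY2 : ∀ x : Fin N → ℝ, (Y *ᵥ x) ⬝ᵥ (Y *ᵥ x) = x ⬝ᵥ x → ∃ s : ℝ, x = s • vb)
    (hsum : ∑ i, ∑ k, Y i k * X i k = nuclearNorm X) :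
    X = (nuclearNorm X / nr) • vecMulVec (Y *ᵥ vb) vb := by
  -- termwise equality
  have hle : ∀ j ∈ Finset.univ, (Y *ᵥ evec X j) ⬝ᵥ (X *ᵥ evec X j) ≤ Real.sqrt (eval' X j) :=
    fun j _ => term_le X Y hY1 j
  have hsum2 : ∑ j, (Y *ᵥ evec X j) ⬝ᵥ (X *ᵥ evec X j) = ∑ j, Real.sqrt (eval' X j) := by
    rw [← trace_pairing, hsum, nuclearNorm_eq]
  have hterm : ∀ j, (Y *ᵥ evec X j) ⬝ᵥ (X *ᵥ evec X j) = Real.sqrt (eval' X j) := by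
    intro j
    exact (Finset.sum_eq_sum_iff_of_le hle).mp hsum2 j (Finset.mem_univ j)
  -- per-j structure
  have hkey : ∀ j i k, (X *ᵥ evec X j) i * evec X j k
      = (Real.sqrt (eval' X j) / nr) * ((Y *ᵥ vb) i * vb k) := by
    intro j i k
    set σ := Real.sqrt (eval' X j) with hσ
    set u := evec X j with hu
    set bb := X *ᵥ u with hbb
    set aa := Y *ᵥ u with haa
    have hbbn : bb ⬝ᵥ bb = eval' X j := eval_eq_dot X j
    have hσnn : 0 ≤ σ := Real.sqrt_nonneg _
    have hσσ : σ * σ = eval' X j := Real.mul_self_sqrt (eval_nonneg X j)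
    rcases eq_or_lt_of_le hσnn with hσ0 | hσpos
    · -- σ = 0 : X *ᵥ u = 0
      have : bb ⬝ᵥ bb = 0 := by rw [hbbn, ← hσσ, ← hσ0]; ring
      have hb0 : bb = 0 := dotProduct_self_eq_zero.mp this
      rw [hb0, ← hσ0]
      simp
    · -- σ > 0
      have haan : aa ⬝ᵥ aa ≤ 1 := (hY1 u).trans_eq (evec_norm X j)
      have hab : aa ⬝ᵥ bb = σ := hterm j
      -- d := bb - σ • aa has nonpositive square norm
      have hd : (bb - σ • aa) ⬝ᵥ (bb - σ • aa) = σ * σ * (aa ⬝ᵥ aa - 1) := by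
        simp only [sub_dotProduct, dotProduct_sub, smul_dotProduct,
          dotProduct_smul, smul_eq_mul]
        rw [hbbn, ← hσσ, dotProduct_comm bb aa, hab]
        ring
      have hd0 : (bb - σ • aa) ⬝ᵥ (bb - σ • aa) = 0 := by
        have h1 := dot_self_nonneg (bb - σ • aa)
        nlinarith
      have hbσa : bb = σ • aa := by
        have := dotProduct_self_eq_zero.mp hd0
        exact sub_eq_zero.mp this
      have haa1 : aa ⬝ᵥ aa = 1 := by
        rw [hd0] at hd
        nlinarith [mul_pos hσpos hσpos]
      -- extract collinearity of u with vb
      obtain ⟨s, hs⟩ := hY2 u (by rw [← haa, haa1, evec_norm])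
      have hs2 : s * s * nr = 1 := by
        have h5 : u ⬝ᵥ u = 1 := evec_norm X j
        rw [hs] at h5
        simpa [smul_dotProduct, dotProduct_smul, smul_eq_mul, hvv,
          mul_assoc] using h5
      have hYu : aa = s • (Y *ᵥ vb) := by rw [haa, hs, Matrix.mulVec_smul]
      -- compute
      rw [hbσa, hYu, hs]
      simp only [Pi.smul_apply, smul_eq_mul]
      have hnr' : nr ≠ 0 := ne_of_gt hnr
      field_simp
      linear_combination ((Y *ᵥ vb) i * vb k) * hs2
  -- assemble
  ext i k
  rw [expansion X i k]
  simp only [Matrix.smul_apply, vecMulVec_apply, smul_eq_mul, nuclearNorm_eq]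
  calc ∑ j, (X *ᵥ evec X j) i * evec X j k
      = ∑ j, (Real.sqrt (eval' X j) / nr) * ((Y *ᵥ vb) i * vb k) :=
        Finset.sum_congr rfl fun j _ => hkey j i k
    _ = (∑ j, Real.sqrt (eval' X j)) / nr * ((Y *ᵥ vb) i * vb k) := by
        rw [Finset.sum_div, Finset.sum_mul]
    _ = _ := by ring

variable {M N : ℕ}

lemma dot_expand {K : ℕ} (c : ℝ) (p z : Fin K → ℝ) :
    (c • p + z) ⬝ᵥ (c • p + z) = c * c * (p ⬝ᵥ p) + 2 * c * (p ⬝ᵥ z) + z ⬝ᵥ z := by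
  simp only [add_dotProduct, dotProduct_add, smul_dotProduct,
    dotProduct_smul, smul_eq_mul, dotProduct_comm z p]
  ring

lemma charVec_sum {K : ℕ} (S : Finset (Fin K)) : ∑ i, charVec S i = (S.card : ℝ) := by
  simp [charVec]

lemma charVec_dot {K : ℕ} (S : Finset (Fin K)) : charVec S ⬝ᵥ charVec S = (S.card : ℝ) := by
  simp [charVec, dotProduct, ite_and]

lemma double_sum_vmv (a : Fin M → ℝ) (b : Fin N → ℝ) :
    ∑ i, ∑ k, vecMulVec a b i k = (∑ i, a i) * (∑ k, b k) := by
  simp only [vecMulVec_apply, ← Finset.mul_sum]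
  rw [← Finset.sum_mul]

end BQ

open BQ

set_option maxHeartbeats 1000000

/-- KKT conditions for the biclique relaxation (B). Under the stated
multiplier conditions, `X* = ū v̄ᵀ` is optimal for (B) and `G` has no biclique with more
than `mn` edges; if moreover `‖W‖ < 1` and `μ > 0`, then `X*` is the unique optimizer of
(B) and `U* × V*` is the unique biclique of `G` with `mn` edges. -/
theorem biclique_relaxation_optimality
    (M N m n : ℕ) (hm : 1 ≤ m) (hn : 1 ≤ n)
    (E : Set (Fin M × Fin N))
    (Ustar : Finset (Fin M)) (Vstar : Finset (Fin N))
    (hUm : Ustar.card = m) (hVn : Vstar.card = n)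
    (hbic : ∀ i ∈ Ustar, ∀ j ∈ Vstar, (i, j) ∈ E)
    (W Λ : Matrix (Fin M) (Fin N) ℝ) (μ : ℝ) (hμ : 0 ≤ μ)
    (hWv : W *ᵥ charVec Vstar = 0)
    (hWu : charVec Ustar ᵥ* W = 0)
    (hWnorm : matSpectralNorm W ≤ 1)
    (hΛ : ∀ i j, (i, j) ∈ E → Λ i j = 0)
    (heq : (Real.sqrt ((m : ℝ) * n))⁻¹ • vecMulVec (charVec Ustar) (charVec Vstar) + W
         = μ • Matrix.of (fun _ _ => (1 : ℝ)) + Λ) :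
    ((∀ X : Matrix (Fin M) (Fin N) ℝ, FeasR E m n X →
        nuclearNorm X ≥ nuclearNorm (vecMulVec (charVec Ustar) (charVec Vstar))) ∧
     (∀ (I : Finset (Fin M)) (J : Finset (Fin N)),
        (∀ i ∈ I, ∀ j ∈ J, (i, j) ∈ E) → I.card * J.card ≤ m * n)) ∧
    (matSpectralNorm W < 1 → 0 < μ →
      (∀ X : Matrix (Fin M) (Fin N) ℝ, FeasR E m n X →
          X ≠ vecMulVec (charVec Ustar) (charVec Vstar) →
          nuclearNorm X > nuclearNorm (vecMulVec (charVec Ustar) (charVec Vstar))) ∧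
      (∀ (I : Finset (Fin M)) (J : Finset (Fin N)),
        (∀ i ∈ I, ∀ j ∈ J, (i, j) ∈ E) → I.card * J.card = m * n →
        I = Ustar ∧ J = Vstar)) := by
  classical
  set ub := charVec Ustar with hubdef
  set vb := charVec Vstar with hvbdef
  set r := Real.sqrt ((m : ℝ) * n) with hrdef
  set Y := r⁻¹ • vecMulVec ub vb + W with hYdef
  have hm' : (0:ℝ) < m := by exact_mod_cast hm
  have hn' : (0:ℝ) < n := by exact_mod_cast hn
  have hmn : (0:ℝ) < (m:ℝ) * n := mul_pos hm' hn'
  have hr : 0 < r := Real.sqrt_pos.mpr hmn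
  have hr2 : r * r = (m:ℝ) * n := Real.mul_self_sqrt hmn.le
  have hubd : ub ⬝ᵥ ub = (m:ℝ) := by rw [hubdef, charVec_dot, hUm]
  have hvbd : vb ⬝ᵥ vb = (n:ℝ) := by rw [hvbdef, charVec_dot, hVn]
  have hubs : ∑ i, ub i = (m:ℝ) := by rw [hubdef, charVec_sum, hUm]
  have hvbs : ∑ k, vb k = (n:ℝ) := by rw [hvbdef, charVec_sum, hVn]
  -- entries of Y
  have hYe : ∀ i k, Y i k = μ + Λ i k := by
    intro i k
    rw [heq]
    simp [Matrix.add_apply, Matrix.smul_apply, Matrix.of_apply, smul_eq_mul]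
  -- mulVec formula for Y
  have hYx : ∀ x : Fin N → ℝ, Y *ᵥ x = (r⁻¹ * (vb ⬝ᵥ x)) • ub + W *ᵥ x := by
    intro x
    rw [hYdef, Matrix.add_mulVec, Matrix.smul_mulVec, vmv_mulVec, smul_smul]
  -- the key quadratic estimate
  have hkey : ∀ x : Fin N → ℝ,
      (Y *ᵥ x) ⬝ᵥ (Y *ᵥ x) ≤ x ⬝ᵥ x - (1 - matSpectralNorm W ^ 2) *
        ((x - ((vb ⬝ᵥ x) / n) • vb) ⬝ᵥ (x - ((vb ⬝ᵥ x) / n) • vb)) := by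
    intro x
    set s : ℝ := (vb ⬝ᵥ x) / n with hsdef
    set w : (Fin N → ℝ) := x - s • vb with hwdef
    have hxw : x = s • vb + w := by rw [hwdef]; abel
    have hvw : vb ⬝ᵥ w = 0 := by
      rw [hwdef, dotProduct_sub, dotProduct_smul, hvbd, smul_eq_mul, hsdef]
      field_simp
      ring
    have hWx : W *ᵥ x = W *ᵥ w := by
      conv_lhs => rw [hxw]
      rw [Matrix.mulVec_add, Matrix.mulVec_smul, hWv]
      simp
    have hperp : ub ⬝ᵥ (W *ᵥ w) = 0 := by
      rw [Matrix.dotProduct_mulVec, hWu, zero_dotProduct]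
    have hvbx : vb ⬝ᵥ x = s * n := by rw [hsdef]; field_simp
    have eq1 : (Y *ᵥ x) ⬝ᵥ (Y *ᵥ x) = s^2 * n + (W *ᵥ w) ⬝ᵥ (W *ᵥ w) := by
      rw [hYx x, hWx, dot_expand, hubd, hperp, hvbx]
      have hrr : (r⁻¹ * (s * n)) * (r⁻¹ * (s * n)) * (m:ℝ) = s^2 * n := by
        have h1 : r⁻¹ * r⁻¹ = ((m:ℝ)*n)⁻¹ := by rw [← mul_inv, hr2]
        rw [show (r⁻¹ * (s * n)) * (r⁻¹ * (s * n)) * (m:ℝ)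
            = (r⁻¹ * r⁻¹) * (s * s * n * n * m) by ring, h1]
        field_simp
      rw [hrr]
      ring
    have eq2 : x ⬝ᵥ x = s^2 * n + w ⬝ᵥ w := by
      conv_lhs => rw [hxw]
      rw [dot_expand, hvbd, hvw]
      ring
    rw [eq1, eq2]
    have hsb := spectral_bound W w
    linarith
  -- weak norm bound
  have hρnn := spectralNorm_nonneg W
  have hρ2le : matSpectralNorm W ^ 2 ≤ 1 := by nlinarith
  have hY1 : ∀ x : Fin N → ℝ, (Y *ᵥ x) ⬝ᵥ (Y *ᵥ x) ≤ x ⬝ᵥ x := by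
    intro x
    have h1 := hkey x
    have h2 := dot_self_nonneg (x - ((vb ⬝ᵥ x) / n) • vb)
    nlinarith
  -- pairing with the multipliers
  have hpair : ∀ X : Matrix (Fin M) (Fin N) ℝ, (∀ i k, (i,k) ∉ E → X i k = 0) →
      ∑ i, ∑ k, Y i k * X i k = μ * (∑ i, ∑ k, X i k) := by
    intro X hX0
    rw [Finset.mul_sum]
    refine Finset.sum_congr rfl fun i _ => ?_
    rw [Finset.mul_sum]
    refine Finset.sum_congr rfl fun k _ => ?_
    rw [hYe i k, add_mul]
    rcases em ((i,k) ∈ E) with hE | hE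
    · rw [hΛ i k hE]; ring
    · rw [hX0 i k hE]; ring
  -- the value of μ
  have hμr : μ * ((m:ℝ) * n) = r := by
    have h := congrArg (fun A => ub ⬝ᵥ (A *ᵥ vb)) heq
    rw [Matrix.add_mulVec, Matrix.smul_mulVec, vmv_mulVec, hWv, add_zero,
      Matrix.add_mulVec, Matrix.smul_mulVec] at h
    have hones : (Matrix.of fun _ _ => (1:ℝ) : Matrix (Fin M) (Fin N) ℝ) *ᵥ vb
        = fun _ => (n:ℝ) := by
      ext i
      simp [Matrix.mulVec, dotProduct]
      exact hvbs
    rw [hones] at h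
    have hL : ub ⬝ᵥ (r⁻¹ • ((vb ⬝ᵥ vb) • ub)) = r⁻¹ * (n * m) := by
      rw [dotProduct_smul, dotProduct_smul, hubd, hvbd]
      simp only [smul_eq_mul]
    have hR : ub ⬝ᵥ (μ • (fun _ => (n:ℝ)) + Λ *ᵥ vb) = μ * (m * n) := by
      rw [dotProduct_add]
      have hconst : ub ⬝ᵥ (fun _ => (n:ℝ)) = (m:ℝ) * n := by
        simp only [dotProduct]
        rw [← Finset.sum_mul, hubs]
      have h1 : ub ⬝ᵥ (μ • (fun _ => (n:ℝ))) = μ * (m * n) := by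
        rw [dotProduct_smul, smul_eq_mul, hconst]
      have h2 : ub ⬝ᵥ (Λ *ᵥ vb) = 0 := by
        rw [dotProduct]
        refine Finset.sum_eq_zero fun i _ => ?_
        rcases em (i ∈ Ustar) with hi | hi
        · have : (Λ *ᵥ vb) i = 0 := by
            rw [Matrix.mulVec, dotProduct]
            refine Finset.sum_eq_zero fun k _ => ?_
            rcases em (k ∈ Vstar) with hk | hk
            · rw [hΛ i k (hbic i hi k hk)]; ring
            · rw [hvbdef]; simp [charVec, hk]
          rw [this, mul_zero]
        · rw [hubdef]; simp [charVec, hi]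
      rw [h1, h2, add_zero]
    rw [hL, hR] at h
    have : μ * ((m:ℝ) * n) = r⁻¹ * ((m:ℝ) * n) := by rw [← h]; ring
    rw [this, ← hr2]
    field_simp
  -- nuclear norm of X*
  have hXstar : nuclearNorm (vecMulVec ub vb) = r := by
    rw [nuclear_vecMulVec, hubd, hvbd, hrdef, Real.sqrt_mul hm'.le]
  -- main lower bound
  have main1 : ∀ X : Matrix (Fin M) (Fin N) ℝ, FeasR E m n X → r ≤ nuclearNorm X := by
    intro X hX
    have h1 := key_lower X Y hY1
    have h2 := hpair X hX.2
    have h3 : μ * ((m:ℝ)*n) ≤ μ * (∑ i, ∑ k, X i k) := mul_le_mul_of_nonneg_left hX.1 hμ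
    calc r = μ * ((m:ℝ)*n) := hμr.symm
      _ ≤ μ * (∑ i, ∑ k, X i k) := h3
      _ = ∑ i, ∑ k, Y i k * X i k := h2.symm
      _ ≤ nuclearNorm X := h1
  -- Part 1b : no biclique has more than mn edges
  have main1b : ∀ (I : Finset (Fin M)) (J : Finset (Fin N)),
      (∀ i ∈ I, ∀ j ∈ J, (i, j) ∈ E) → I.card * J.card ≤ m * n := by
    intro I J hIJ
    rcases Nat.eq_zero_or_pos (I.card * J.card) with h0 | hpos
    · rw [h0]; exact Nat.zero_le _
    · have hp : (0:ℝ) < (I.card : ℝ) * J.card := by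
        have h1 : (0:ℝ) < ((I.card * J.card : ℕ) : ℝ) := by exact_mod_cast hpos
        push_cast at h1; exact h1
      set p : ℝ := (I.card : ℝ) * J.card with hpdef
      set c : ℝ := ((m:ℝ) * n) / p with hcdef
      have hc : 0 < c := div_pos hmn hp
      set Z := vecMulVec (c • charVec I) (charVec J) with hZdef
      have hZsum : ∑ i, ∑ k, Z i k = (m:ℝ) * n := by
        rw [hZdef, double_sum_vmv]
        have e1 : ∑ i, (c • charVec I) i = c * I.card := by
          simp only [Pi.smul_apply, smul_eq_mul, ← Finset.mul_sum]
          rw [charVec_sum]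
        rw [e1, charVec_sum, mul_assoc, ← hpdef, hcdef, div_mul_cancel₀ _ (ne_of_gt hp)]
      have hZfeas : FeasR E m n Z := by
        constructor
        · rw [hZsum]
        · intro i k hik
          have hni : i ∉ I ∨ k ∉ J := by
            by_contra hcon
            push_neg at hcon
            exact hik (hIJ i hcon.1 k hcon.2)
          rcases hni with hi | hk
          · simp [hZdef, vecMulVec_apply, charVec, hi]
          · simp [hZdef, vecMulVec_apply, charVec, hk]
      have hlow := main1 Z hZfeas
      have hZnuc : nuclearNorm Z = c * Real.sqrt p := by
        rw [hZdef, nuclear_vecMulVec]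
        have e2 : (c • charVec I) ⬝ᵥ (c • charVec I) = c^2 * I.card := by
          rw [smul_dotProduct, dotProduct_smul, charVec_dot, smul_eq_mul,
            smul_eq_mul]
          ring
        rw [e2, charVec_dot, Real.sqrt_mul (sq_nonneg c), Real.sqrt_sq hc.le, hpdef,
          Real.sqrt_mul (Nat.cast_nonneg _), mul_assoc]
      rw [hZnuc] at hlow
      have hsp : Real.sqrt p * Real.sqrt p = p := Real.mul_self_sqrt hp.le
      have hsppos : 0 < Real.sqrt p := Real.sqrt_pos.mpr hp
      have h7 : r * (Real.sqrt p * Real.sqrt p) ≤ ((m:ℝ)*n) * Real.sqrt p := by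
        have h5 := mul_le_mul_of_nonneg_right hlow hp.le
        rw [hsp]
        calc r * p ≤ c * Real.sqrt p * p := h5
          _ = ((m:ℝ)*n) * Real.sqrt p := by
              rw [hcdef]; field_simp
      have h8 : r * Real.sqrt p ≤ (m:ℝ) * n := by
        rw [← mul_assoc] at h7
        exact le_of_mul_le_mul_right h7 hsppos
      have h9 : Real.sqrt p ≤ r := by
        rw [← hr2] at h8
        exact le_of_mul_le_mul_left h8 hr
      have h10 : p ≤ (m:ℝ) * n := by
        calc p = Real.sqrt p * Real.sqrt p := hsp.symm
          _ ≤ r * Real.sqrt p := mul_le_mul_of_nonneg_right h9 (Real.sqrt_nonneg p)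
          _ ≤ r * r := mul_le_mul_of_nonneg_left h9 hr.le
          _ = (m:ℝ) * n := hr2
      rw [hpdef] at h10
      exact_mod_cast h10
  -- Part 2a : strict optimality
  have main2a : matSpectralNorm W < 1 →
      ∀ X : Matrix (Fin M) (Fin N) ℝ, FeasR E m n X →
        X ≠ vecMulVec ub vb → nuclearNorm (vecMulVec ub vb) < nuclearNorm X := by
    intro hρ X hX hne
    by_contra hcon
    push_neg at hcon
    rw [hXstar] at hcon
    have h1 := key_lower X Y hY1
    have h2 := hpair X hX.2
    have h3 : r ≤ ∑ i, ∑ k, Y i k * X i k := by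
      calc r = μ * ((m:ℝ)*n) := hμr.symm
        _ ≤ μ * (∑ i, ∑ k, X i k) := mul_le_mul_of_nonneg_left hX.1 hμ
        _ = ∑ i, ∑ k, Y i k * X i k := h2.symm
    have hsum : ∑ i, ∑ k, Y i k * X i k = nuclearNorm X := le_antisymm h1 (by linarith)
    have hY2 : ∀ x : Fin N → ℝ, (Y *ᵥ x) ⬝ᵥ (Y *ᵥ x) = x ⬝ᵥ x → ∃ s : ℝ, x = s • vb := by
      intro x hx
      have hk := hkey x
      have hρ2 : matSpectralNorm W ^ 2 < 1 := by nlinarith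
      have hww0 := dot_self_nonneg (x - ((vb ⬝ᵥ x) / n) • vb)
      have hww : (x - ((vb ⬝ᵥ x) / n) • vb) ⬝ᵥ (x - ((vb ⬝ᵥ x) / n) • vb) = 0 := by nlinarith
      refine ⟨(vb ⬝ᵥ x) / n, ?_⟩
      have h6 := dotProduct_self_eq_zero.mp hww
      exact sub_eq_zero.mp h6
    have hXeq := key_strict X Y vb (n:ℝ) hn' hvbd hY1 hY2 hsum
    have hnucr : nuclearNorm X = r := le_antisymm hcon (by linarith)
    have hYvb : Y *ᵥ vb = (r⁻¹ * (n:ℝ)) • ub := by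
      rw [hYx vb, hvbd, hWv, add_zero]
    apply hne
    rw [hXeq, hnucr, hYvb]
    ext i k
    simp only [Matrix.smul_apply, vecMulVec_apply, Pi.smul_apply, smul_eq_mul]
    field_simp
  -- Part 2b : uniqueness of the biclique
  have main2b : matSpectralNorm W < 1 →
      ∀ (I : Finset (Fin M)) (J : Finset (Fin N)),
        (∀ i ∈ I, ∀ j ∈ J, (i, j) ∈ E) → I.card * J.card = m * n →
        I = Ustar ∧ J = Vstar := by
    intro hρ I J hIJ hcard
    set Z := vecMulVec (charVec I) (charVec J) with hZdef
    have hcast : ((I.card : ℝ)) * (J.card : ℝ) = (m:ℝ) * n := by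
      have := congrArg (fun t : ℕ => (t : ℝ)) hcard
      push_cast at this
      exact this
    have hZsum : ∑ i, ∑ k, Z i k = (m:ℝ) * n := by
      rw [hZdef, double_sum_vmv, charVec_sum, charVec_sum, hcast]
    have hZfeas : FeasR E m n Z := by
      constructor
      · rw [hZsum]
      · intro i k hik
        have hni : i ∉ I ∨ k ∉ J := by
          by_contra hcon
          push_neg at hcon
          exact hik (hIJ i hcon.1 k hcon.2)
        rcases hni with hi | hk
        · simp [hZdef, vecMulVec_apply, charVec, hi]
        · simp [hZdef, vecMulVec_apply, charVec, hk]
    have hZnuc : nuclearNorm Z = r := by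
      rw [hZdef, nuclear_vecMulVec, charVec_dot, charVec_dot,
        ← Real.sqrt_mul (Nat.cast_nonneg _), hcast, hrdef]
    have hZX : Z = vecMulVec ub vb := by
      by_contra hne
      have hgt := main2a hρ Z hZfeas hne
      rw [hXstar, hZnuc] at hgt
      exact lt_irrefl r hgt
    have hent : ∀ i k, charVec I i * charVec J k = charVec Ustar i * charVec Vstar k := by
      intro i k
      have h5 := congrFun (congrFun hZX i) k
      simpa [hZdef, vecMulVec_apply, hubdef, hvbdef] using h5
    have hmnpos : 0 < m * n := Nat.mul_pos hm hn
    have hIpos : 0 < I.card := by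
      rcases Nat.eq_zero_or_pos I.card with h0 | h; · rw [h0] at hcard; simp at hcard; omega
      exact h
    have hJpos : 0 < J.card := by
      rcases Nat.eq_zero_or_pos J.card with h0 | h; · rw [h0] at hcard; simp at hcard; omega
      exact h
    obtain ⟨i0, hi0⟩ := Finset.card_pos.mp hIpos
    obtain ⟨j0, hj0⟩ := Finset.card_pos.mp hJpos
    have h00 := hent i0 j0
    simp only [charVec, if_pos hi0, if_pos hj0, one_mul] at h00
    have hi0U : i0 ∈ Ustar := by
      by_contra hcon
      rw [if_neg hcon, zero_mul] at h00
      norm_num at h00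
    have hj0V : j0 ∈ Vstar := by
      by_contra hcon
      rw [if_pos hi0U, if_neg hcon, one_mul] at h00
      norm_num at h00
    constructor
    · refine Finset.ext fun i => ?_
      have h1 := hent i j0
      simp only [charVec, if_pos hj0, if_pos hj0V, mul_one] at h1
      by_cases hi : i ∈ I <;> by_cases hu : i ∈ Ustar
      · exact iff_of_true hi hu
      · rw [if_pos hi, if_neg hu] at h1; norm_num at h1
      · rw [if_neg hi, if_pos hu] at h1; norm_num at h1
      · exact iff_of_false hi hu
    · refine Finset.ext fun k => ?_
      have h1 := hent i0 k
      simp only [charVec, if_pos hi0, if_pos hi0U, one_mul] at h1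
      by_cases hk : k ∈ J <;> by_cases hv : k ∈ Vstar
      · exact iff_of_true hk hv
      · rw [if_pos hk, if_neg hv] at h1; norm_num at h1
      · rw [if_neg hk, if_pos hv] at h1; norm_num at h1
      · exact iff_of_false hk hv
  -- assemble
  refine ⟨⟨?_, main1b⟩, fun hρ _ => ⟨fun X hX hne => main2a hρ X hX hne, main2b hρ⟩⟩
  intro X hX
  rw [ge_iff_le, hXstar]
  exact main1 X hX
end
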